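/- Let (f_k)_{k∈ℕ} be a frame sequence in H with synthesis operator T and Gram operator G = T* T, and let T†, (T*)† and G† denote the Moore-Penrose pseudoinverses of T, T* and G. Then (T*)† = T ∘ G†, T† = G† ∘ T*, and T† ∘ (T†)* = G†. -/

import Mathlib

/- Setting: `H` is a complex Hilbert space, `ℓ2` is the Hilbert space of square-summable
complex sequences with standard orthonormal basis `lp.single 2 k 1`. -/

noncomputable section

abbrev ℓ2 : Type := lp (fun _ : ℕ => ℂ) 2

variable {H : Type} [NormedAddCommGroup H] [InnerProductSpace ℂ H] [CompleteSpace H]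

/-- The closed linear span `V` of the set of values of the sequence `f`. -/
def spanClosure (f : ℕ → H) : Submodule ℂ H :=
  (Submodule.span ℂ (Set.range f)).topologicalClosure

instance (f : ℕ → H) : CompleteSpace (spanClosure f) :=
  Submodule.topologicalClosure.completeSpace _

/-- `f` is a frame sequence with frame bounds `A`, `B`:  the frame inequality
`A‖g‖² ≤ ∑ₖ |⟨g, fₖ⟩|² ≤ B‖g‖²` holds for every `g` in the closed linear span `V` of the `fₖ`.
(In Mathlib's convention, the paper's `⟨g, fₖ⟩`, linear in the first argument, is `⟪fₖ, g⟫`.) -/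
def IsFrameSeqWith (f : ℕ → H) (A B : ℝ) : Prop :=
  0 < A ∧ 0 < B ∧
    ∀ g ∈ spanClosure f,
      Summable (fun k => ‖(inner ℂ (f k) g : ℂ)‖ ^ 2) ∧
      A * ‖g‖ ^ 2 ≤ ∑' k, ‖(inner ℂ (f k) g : ℂ)‖ ^ 2 ∧
      (∑' k, ‖(inner ℂ (f k) g : ℂ)‖ ^ 2) ≤ B * ‖g‖ ^ 2

/-- `Ad` is the Moore–Penrose pseudoinverse of the bounded operator `A`:
`A A† A = A`, `A† A A† = A†`, `(A A†)* = A A†` and `(A† A)* = A† A`. -/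
def IsMoorePenrose {E F : Type} [NormedAddCommGroup E] [InnerProductSpace ℂ E] [CompleteSpace E]
    [NormedAddCommGroup F] [InnerProductSpace ℂ F] [CompleteSpace F]
    (A : E →L[ℂ] F) (Ad : F →L[ℂ] E) : Prop :=
  A ∘L Ad ∘L A = A ∧ Ad ∘L A ∘L Ad = Ad ∧
  ContinuousLinearMap.adjoint (A ∘L Ad) = A ∘L Ad ∧
  ContinuousLinearMap.adjoint (Ad ∘L A) = Ad ∘L A

open ContinuousLinearMap in
/-- Uniqueness of the Moore–Penrose pseudoinverse. -/
lemma mp_unique {E F : Type} [NormedAddCommGroup E] [InnerProductSpace ℂ E] [CompleteSpace E]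
    [NormedAddCommGroup F] [InnerProductSpace ℂ F] [CompleteSpace F]
    {A : E →L[ℂ] F} {B C : F →L[ℂ] E}
    (hB : IsMoorePenrose A B) (hC : IsMoorePenrose A C) : B = C := by
  obtain ⟨hB1, hB2, hB3, hB4⟩ := hB
  obtain ⟨hC1, hC2, hC3, hC4⟩ := hC
  have hAB : A ∘L B = A ∘L C := by
    have h1 : A ∘L B = (A ∘L C) ∘L (A ∘L B) := by
      conv_lhs => rw [← hC1]
      simp only [comp_assoc]
    have h2 : (A ∘L B) ∘L (A ∘L C) = A ∘L C := by
      conv_rhs => rw [← hB1]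
      simp only [comp_assoc]
    calc A ∘L B = (A ∘L C) ∘L (A ∘L B) := h1
      _ = adjoint (A ∘L C) ∘L adjoint (A ∘L B) := by rw [hC3, hB3]
      _ = adjoint ((A ∘L B) ∘L (A ∘L C)) := (adjoint_comp _ _).symm
      _ = adjoint (A ∘L C) := by rw [h2]
      _ = A ∘L C := hC3
  have hBA : B ∘L A = C ∘L A := by
    have h1 : B ∘L A = (B ∘L A) ∘L (C ∘L A) := by
      conv_lhs => rw [← hC1]
      simp only [comp_assoc]
    have h2 : (C ∘L A) ∘L (B ∘L A) = C ∘L A := by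
      conv_rhs => rw [← hB1]
      simp only [comp_assoc]
    calc B ∘L A = (B ∘L A) ∘L (C ∘L A) := h1
      _ = adjoint (B ∘L A) ∘L adjoint (C ∘L A) := by rw [hC4, hB4]
      _ = adjoint ((C ∘L A) ∘L (B ∘L A)) := (adjoint_comp _ _).symm
      _ = adjoint (C ∘L A) := by rw [h2]
      _ = C ∘L A := hC4
  calc B = B ∘L (A ∘L B) := by conv_lhs => rw [← hB2]
    _ = (B ∘L A) ∘L C := by rw [hAB]; simp only [comp_assoc]
    _ = C ∘L (A ∘L C) := by rw [hBA]; simp only [comp_assoc]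
    _ = C := hC2

open ContinuousLinearMap in
/-- The adjoint of a Moore–Penrose pseudoinverse is the pseudoinverse of the adjoint. -/
lemma mp_adjoint {E F : Type} [NormedAddCommGroup E] [InnerProductSpace ℂ E] [CompleteSpace E]
    [NormedAddCommGroup F] [InnerProductSpace ℂ F] [CompleteSpace F]
    {A : E →L[ℂ] F} {Ad : F →L[ℂ] E} (h : IsMoorePenrose A Ad) :
    IsMoorePenrose (adjoint A) (adjoint Ad) := by
  obtain ⟨h1, h2, h3, h4⟩ := h
  refine ⟨?_, ?_, ?_, ?_⟩
  · simpa only [adjoint_comp, comp_assoc] using congrArg adjoint h1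
  · simpa only [adjoint_comp, comp_assoc] using congrArg adjoint h2
  · rw [← adjoint_comp, h4]
    exact h4
  · rw [← adjoint_comp, h3]
    exact h3

/-- for a frame sequence with synthesis operator `T`, Gram operator
`G = T* T`, and Moore-Penrose pseudoinverses `T†`, `(T*)†`, `G†`:
`(T*)† = T ∘ G†`, `T† = G† ∘ T*` and `T† ∘ (T†)* = G†`. -/
theorem stmt17 (f : ℕ → H) (A B : ℝ) (hF : IsFrameSeqWith f A B)
    (T : ℓ2 →L[ℂ] H) (hT : ∀ c : ℓ2, HasSum (fun k => c k • f k) (T c))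
    (G : ℓ2 →L[ℂ] ℓ2) (hG : G = ContinuousLinearMap.adjoint T ∘L T)
    (Tdag : H →L[ℂ] ℓ2) (hTdag : IsMoorePenrose T Tdag)
    (Tsdag : ℓ2 →L[ℂ] H) (hTsdag : IsMoorePenrose (ContinuousLinearMap.adjoint T) Tsdag)
    (Gdag : ℓ2 →L[ℂ] ℓ2) (hGdag : IsMoorePenrose G Gdag) :
    Tsdag = T ∘L Gdag ∧
      Tdag = Gdag ∘L ContinuousLinearMap.adjoint T ∧
      Tdag ∘L ContinuousLinearMap.adjoint Tdag = Gdag := by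
  open ContinuousLinearMap in
  -- `G` is self-adjoint
  have hGsa : ContinuousLinearMap.adjoint G = G := by
    rw [hG, adjoint_comp, adjoint_adjoint]
  -- `Gdag` is self-adjoint, by uniqueness of the Moore-Penrose inverse of `G = G*`
  have hGdsa : ContinuousLinearMap.adjoint Gdag = Gdag := by
    refine mp_unique ?_ hGdag
    have := mp_adjoint hGdag
    rwa [hGsa] at this
  obtain ⟨hG1, hG2, hG3, hG4⟩ := hGdag
  subst hG
  set S := ContinuousLinearMap.adjoint T with hS
  have hSa : ContinuousLinearMap.adjoint S = T := by rw [hS, adjoint_adjoint]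
  -- kernel of G is contained in the kernel of T
  have hker : ∀ c : ℓ2, S (T c) = 0 → T c = 0 := by
    intro c hc
    have h0 : (inner ℂ (T c) (T c) : ℂ) = 0 := by
      rw [← ContinuousLinearMap.adjoint_inner_left T c (T c), ← hS, hc, inner_zero_left]
    exact inner_self_eq_zero.mp h0
  -- pointwise: T Gdag G = T
  have pTG : ∀ c : ℓ2, T (Gdag (S (T c))) = T c := by
    intro c
    have h1 : S (T (Gdag (S (T c)))) = S (T c) := by
      have := congrArg (fun X : ℓ2 →L[ℂ] ℓ2 => X c) hG1
      simpa using this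
    have h2 : S (T (Gdag (S (T c)) - c)) = 0 := by
      rw [map_sub, map_sub, h1, sub_self]
    have := hker _ h2
    rw [map_sub, sub_eq_zero] at this
    exact this
  -- pointwise: Gdag G Gdag = Gdag
  have pG2 : ∀ c : ℓ2, Gdag (S (T (Gdag c))) = Gdag c := by
    intro c
    have := congrArg (fun X : ℓ2 →L[ℂ] ℓ2 => X c) hG2
    simpa using this
  -- operator level: T Gdag G = T and its adjoint G Gdag T* = T*
  have hTG : T ∘L (Gdag ∘L (S ∘L T)) = T := by
    ext c
    exact pTG c
  have hGT : S ∘L (T ∘L (Gdag ∘L S)) = S := by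
    have := congrArg ContinuousLinearMap.adjoint hTG
    simpa only [adjoint_comp, hSa, hGdsa, ← hS, comp_assoc] using this
  -- commutation: Gdag G = G Gdag
  have hcomm : Gdag ∘L (S ∘L T) = S ∘L (T ∘L Gdag) := by
    simpa only [adjoint_comp, hSa, hGdsa, ← hS, comp_assoc] using hG3
  -- T ∘ Gdag is a Moore-Penrose inverse of S = T*
  have claimA : IsMoorePenrose S (T ∘L Gdag) := by
    refine ⟨?_, ?_, ?_, ?_⟩
    · simpa only [comp_assoc] using hGT
    · ext c
      exact pTG (Gdag c)
    · simp only [adjoint_comp, hSa, hGdsa, ← hS, comp_assoc]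
      exact hcomm
    · simp only [adjoint_comp, hSa, hGdsa, ← hS, comp_assoc]
  -- Gdag ∘ T* is a Moore-Penrose inverse of T
  have claimB : IsMoorePenrose T (Gdag ∘L S) := by
    refine ⟨?_, ?_, ?_, ?_⟩
    · ext c
      exact pTG c
    · exact ContinuousLinearMap.ext fun h => pG2 (S h)
    · simp only [adjoint_comp, hSa, hGdsa, ← hS, comp_assoc]
    · simp only [adjoint_comp, hSa, hGdsa, ← hS, comp_assoc]
      exact hcomm.symm
  have e1 : Tsdag = T ∘L Gdag := mp_unique hTsdag claimA
  have e2 : Tdag = Gdag ∘L S := mp_unique hTdag claimB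
  refine ⟨e1, e2, ?_⟩
  rw [e2]
  simp only [adjoint_comp, hSa, hGdsa, ← hS, comp_assoc]
  exact ContinuousLinearMap.ext fun c => pG2 c

end
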